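/- Let f ∈ E nonzero, φ ∈ X, and for s ∈ (0,‖f‖_{L^∞}) define the pseudo-inverse (f*∘a_φ)^{-1}(s) = sup{e ∈ [min φ, 0) : f*(a_φ(e)) > s}. Then (f*∘a_φ)^{-1} is nonincreasing, and for all (x,v): f^{*φ}(x,v) > s implies |v|²/2+φ(x) ≤ (f*∘a_φ)^{-1}(s), while f^{*φ}(x,v) ≤ s implies |v|²/2+φ(x) ≥ (f*∘a_φ)^{-1}(s). -/

import Mathlib

open MeasureTheory Real Filter Set ENNReal

noncomputable section

abbrev R3 := EuclideanSpace ℝ (Fin 3)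

def mX (φ : R3 → ℝ) : ℝ := ⨅ x : R3, (1 + ‖x‖) * |φ x|

def memX (φ : R3 → ℝ) : Prop :=
  Continuous φ ∧ (∀ x, φ x ≤ 0) ∧ Tendsto φ (cocompact R3) (nhds 0) ∧
    Integrable (fun x => ‖fderiv ℝ φ x‖ ^ 2) ∧ 0 < mX φ

def memE (f : R3 × R3 → ℝ) : Prop :=
  (∀ p, 0 ≤ f p) ∧ Integrable f ∧ MemLp f ⊤ volume ∧
    Integrable (fun p : R3 × R3 => ‖p.2‖ ^ 2 * f p)

def aphi (φ : R3 → ℝ) (e : ℝ) : ℝ :=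
  (8 * π * Real.sqrt 2 / 3) * ∫ x : R3, (max (e - φ x) 0) ^ ((3 : ℝ) / 2)

/-- Distribution function `μ_f(s) = meas{f > s}`. -/
def distFun (f : R3 × R3 → ℝ) (s : ℝ) : ℝ≥0∞ := volume {p : R3 × R3 | f p > s}

/-- Schwarz symmetric decreasing rearrangement on `ℝ₊`. -/
def schwarz (f : R3 × R3 → ℝ) (t : ℝ) : ℝ :=
  sInf {s : ℝ | 0 ≤ s ∧ distFun f s ≤ ENNReal.ofReal t}

/-- The generalized rearrangement `f^{*φ}` with respect to the microscopic energy. -/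
def genRearr (f : R3 × R3 → ℝ) (φ : R3 → ℝ) (p : R3 × R3) : ℝ :=
  if ‖p.2‖ ^ 2 / 2 + φ p.1 < 0 then schwarz f (aphi φ (‖p.2‖ ^ 2 / 2 + φ p.1)) else 0


/-- Pseudo-inverse of `f* ∘ a_φ`, with `m = min φ`. -/
def pseudoInv (f : R3 × R3 → ℝ) (φ : R3 → ℝ) (m : ℝ) (s : ℝ) : ℝ :=
  sSup {e : ℝ | e ∈ Ico m (0 : ℝ) ∧ schwarz f (aphi φ e) > s}

namespace PseudoInvAux

variable {φ : R3 → ℝ} {f : R3 × R3 → ℝ}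

lemma neg_bound (hφ : memX φ) (x : R3) : mX φ / (1 + ‖x‖) ≤ -φ x := by
  have h1 : (0:ℝ) < 1 + ‖x‖ := by positivity
  have h2 : mX φ ≤ (1 + ‖x‖) * |φ x| := by
    apply ciInf_le ⟨0, ?_⟩ x
    rintro y ⟨z, rfl⟩
    positivity
  have h3 : |φ x| = -φ x := abs_of_nonpos (hφ.2.1 x)
  rw [h3] at h2
  rw [div_le_iff₀ h1]
  linarith [h2]

lemma sublevel_compact (hφ : memX φ) {e : ℝ} (he : e < 0) :
    IsCompact {x : R3 | φ x ≤ e} := by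
  have hmem : Ioi e ∈ nhds (0:ℝ) := Ioi_mem_nhds he
  have h := hφ.2.2.1 hmem
  rw [mem_map, mem_cocompact] at h
  obtain ⟨K, hK, hKs⟩ := h
  apply hK.of_isClosed_subset (isClosed_le hφ.1 continuous_const)
  intro x hx
  by_contra hxK
  have : φ x ∈ Ioi e := hKs hxK
  exact absurd hx (by simpa using this)

lemma integrable_aux (hφ : memX φ) {e : ℝ} (he : e < 0) :
    Integrable (fun x : R3 => (max (e - φ x) 0) ^ ((3:ℝ)/2)) := by
  have hc : Continuous fun x : R3 => (max (e - φ x) 0) ^ ((3:ℝ)/2) := by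
    apply Continuous.rpow_const ((continuous_const.sub hφ.1).max continuous_const)
    intro x; right; norm_num
  apply hc.integrable_of_hasCompactSupport
  apply HasCompactSupport.intro (sublevel_compact hφ he)
  intro x hx
  have hx' : e < φ x := by simpa using hx
  rw [max_eq_right (by linarith)]
  exact Real.zero_rpow (by norm_num)

lemma aphi_mono (hφ : memX φ) {e e' : ℝ} (h : e ≤ e') (he' : e' < 0) :
    aphi φ e ≤ aphi φ e' := by
  unfold aphi
  have hC : 0 ≤ 8 * π * Real.sqrt 2 / 3 := by positivity
  apply mul_le_mul_of_nonneg_left _ hC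
  apply integral_mono (integrable_aux hφ (lt_of_le_of_lt h he')) (integrable_aux hφ he')
  intro x
  exact Real.rpow_le_rpow (le_max_right _ _) (max_le_max (by linarith) le_rfl) (by norm_num)

lemma aphi_min {x₀ : R3} (hx₀ : ∀ x, φ x₀ ≤ φ x) : aphi φ (φ x₀) = 0 := by
  unfold aphi
  have h : ∀ x : R3, (max (φ x₀ - φ x) 0) ^ ((3:ℝ)/2) = 0 := fun x => by
    rw [max_eq_right (by linarith [hx₀ x])]
    exact Real.zero_rpow (by norm_num)
  simp only [h, integral_zero, mul_zero]

lemma aphi_unbounded (hφ : memX φ) (D : ℝ) : ∃ e : ℝ, e < 0 ∧ D ≤ aphi φ e := by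
  have hπ : (0:ℝ) < π := Real.pi_pos
  have hm : 0 < mX φ := hφ.2.2.2.2
  set C : ℝ := 8 * π * Real.sqrt 2 / 3 with hCdef
  have hC : 0 < C := by positivity
  set v₁ : ℝ := (volume (Metric.ball (0:R3) 1)).toReal with hv₁def
  have hv₁ : 0 < v₁ := ENNReal.toReal_pos
    (Metric.measure_ball_pos _ _ one_pos).ne' measure_ball_lt_top.ne
  set K : ℝ := C * v₁ * (mX φ)^2 / 16 with hKdef
  have hK : 0 < K := by positivity
  set R : ℝ := max (max 1 (mX φ / 2)) (D / K) with hRdef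
  have hR1 : (1:ℝ) ≤ R := le_trans (le_max_left _ _) (le_max_left _ _)
  have hR2 : mX φ / 2 ≤ R := le_trans (le_max_right _ _) (le_max_left _ _)
  have hR3 : D / K ≤ R := le_max_right _ _
  have hRpos : 0 < R := lt_of_lt_of_le one_pos hR1
  set e : ℝ := -(mX φ) / (2 * (1 + R)) with hedef
  have hu : (0:ℝ) < 1 + R := by linarith
  have he : e < 0 := by
    rw [hedef]
    apply div_neg_of_neg_of_pos (by linarith) (by linarith)
  refine ⟨e, he, ?_⟩
  have hneg : -e = mX φ / (2 * (1 + R)) := by rw [hedef]; ring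
  have hne : 0 < -e := by rw [hneg]; positivity
  -- pointwise lower bound on the ball
  have hball : ∀ x ∈ Metric.ball (0:R3) R,
      (-e) ^ ((3:ℝ)/2) ≤ (max (e - φ x) 0) ^ ((3:ℝ)/2) := by
    intro x hx
    have hxR : ‖x‖ < R := by simpa using hx
    have h1 : mX φ / (1 + R) ≤ -φ x := by
      refine le_trans ?_ (neg_bound hφ x)
      apply div_le_div_of_nonneg_left hm.le (by positivity) (by linarith)
    have h2 : -e ≤ e - φ x := by
      rw [hneg]
      have : mX φ / (2 * (1 + R)) = mX φ / (1 + R) - mX φ / (2 * (1 + R)) := by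
        field_simp; ring
      rw [hedef]
      rw [this] at *
      have := h1
      have hh : mX φ / (1 + R) - mX φ / (2 * (1 + R)) ≤ -φ x - mX φ / (2 * (1 + R)) := by
        linarith [h1]
      calc mX φ / (1 + R) - mX φ / (2 * (1 + R))
          ≤ -φ x - mX φ / (2 * (1 + R)) := hh
        _ = -(mX φ) / (2 * (1 + R)) - φ x := by ring
    have h3 : -e ≤ max (e - φ x) 0 := le_trans h2 (le_max_left _ _)
    exact Real.rpow_le_rpow hne.le h3 (by norm_num)
  -- integral lower bound
  have hint : Integrable (fun x : R3 => (max (e - φ x) 0) ^ ((3:ℝ)/2)) :=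
    integrable_aux hφ he
  have hnonneg : 0 ≤ᵐ[volume] fun x : R3 => (max (e - φ x) 0) ^ ((3:ℝ)/2) := by
    filter_upwards with x
    positivity
  have hstep1 : (-e) ^ ((3:ℝ)/2) * (volume (Metric.ball (0:R3) R)).toReal
      ≤ ∫ x in Metric.ball (0:R3) R, (max (e - φ x) 0) ^ ((3:ℝ)/2) := by
    apply setIntegral_ge_of_const_le_real measurableSet_ball measure_ball_lt_top.ne hball
      hint.integrableOn
  have hstep2 : (∫ x in Metric.ball (0:R3) R, (max (e - φ x) 0) ^ ((3:ℝ)/2))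
      ≤ ∫ x : R3, (max (e - φ x) 0) ^ ((3:ℝ)/2) :=
    setIntegral_le_integral hint hnonneg
  -- volume of the ball
  have hvol : (volume (Metric.ball (0:R3) R)).toReal = R ^ 3 * v₁ := by
    have := Measure.addHaar_ball (volume : Measure R3) (0:R3) hRpos.le
    rw [finrank_euclideanSpace_fin] at this
    rw [this, ENNReal.toReal_mul, ENNReal.toReal_ofReal (by positivity)]
  -- (-e)^(3/2) ≥ (-e)^2
  have hele1 : -e ≤ 1 := by
    rw [hneg, div_le_one (by positivity)]
    linarith
  have hpow : (-e) ^ (2:ℝ) ≤ (-e) ^ ((3:ℝ)/2) :=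
    Real.rpow_le_rpow_of_exponent_ge hne hele1 (by norm_num)
  have hpow2 : (-e) ^ (2:ℝ) = (-e)^2 := by
    rw [show (2:ℝ) = ((2:ℕ):ℝ) by norm_num, Real.rpow_natCast]
  -- assemble
  have hchain : C * ((-e)^2 * (R ^ 3 * v₁)) ≤ aphi φ e := by
    unfold aphi
    rw [← hCdef]
    apply mul_le_mul_of_nonneg_left _ hC.le
    calc (-e)^2 * (R ^ 3 * v₁) = (-e)^2 * (volume (Metric.ball (0:R3) R)).toReal := by
          rw [hvol]
      _ ≤ (-e) ^ ((3:ℝ)/2) * (volume (Metric.ball (0:R3) R)).toReal := by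
          apply mul_le_mul_of_nonneg_right (hpow2 ▸ hpow) ENNReal.toReal_nonneg
      _ ≤ ∫ x : R3, (max (e - φ x) 0) ^ ((3:ℝ)/2) := hstep1.trans hstep2
  -- final arithmetic : C * ((-e)^2 * (R^3 * v₁)) ≥ K * R ≥ D
  have hfin : K * R ≤ C * ((-e)^2 * (R ^ 3 * v₁)) := by
    have he2 : (-e)^2 = (mX φ)^2 / (2 * (1 + R))^2 := by
      rw [hneg, div_pow]
    have hden : (2 * (1 + R))^2 ≤ 16 * R^2 := by nlinarith
    have h4 : (mX φ)^2 / (16 * R^2) ≤ (-e)^2 := by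
      rw [he2]
      apply div_le_div_of_nonneg_left (by positivity) (by positivity) hden
    calc K * R = C * ((mX φ)^2 / (16 * R^2) * (R ^ 3 * v₁)) := by
          rw [hKdef]; field_simp
      _ ≤ C * ((-e)^2 * (R ^ 3 * v₁)) := by
          apply mul_le_mul_of_nonneg_left _ hC.le
          apply mul_le_mul_of_nonneg_right h4 (by positivity)
  have hDK : D ≤ K * R := by
    rw [← div_le_iff₀' hK]
    calc D / K ≤ R := hR3
      _ = R := rfl
  linarith [hchain, hfin, hDK]

lemma ae_le_M (hf : memE f) : ∀ᵐ p ∂(volume : Measure (R3 × R3)),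
    f p ≤ (eLpNorm f ⊤ volume).toReal := by
  have hfin : eLpNorm f ⊤ volume < ⊤ := hf.2.2.1.2
  filter_upwards [ae_le_eLpNormEssSup (f := f) (μ := volume)] with p hp
  have h1 : (‖f p‖₊ : ℝ≥0∞) ≤ eLpNorm f ⊤ volume := by
    rwa [eLpNorm_exponent_top]
  have h2 : ((‖f p‖₊ : ℝ≥0∞)).toReal ≤ (eLpNorm f ⊤ volume).toReal :=
    ENNReal.toReal_mono hfin.ne h1
  have h3 : ((‖f p‖₊ : ℝ≥0∞)).toReal = ‖f p‖ := by simp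
  rw [h3] at h2
  exact le_trans (le_abs_self _) h2

lemma distFun_M (hf : memE f) : distFun f ((eLpNorm f ⊤ volume).toReal) = 0 := by
  have h := ae_le_M hf
  rw [ae_iff] at h
  unfold distFun
  convert h using 2
  ext p
  simp [not_le]

lemma M_mem (hf : memE f) (t : ℝ) :
    (eLpNorm f ⊤ volume).toReal ∈ {s : ℝ | 0 ≤ s ∧ distFun f s ≤ ENNReal.ofReal t} :=
  ⟨ENNReal.toReal_nonneg, by rw [distFun_M hf]; exact zero_le⟩

lemma schwarz_bddBelow (t : ℝ) :
    BddBelow {s : ℝ | 0 ≤ s ∧ distFun f s ≤ ENNReal.ofReal t} :=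
  ⟨0, fun _ ha => ha.1⟩

lemma schwarz_le {t s : ℝ} (hs : 0 ≤ s) (h : distFun f s ≤ ENNReal.ofReal t) :
    schwarz f t ≤ s :=
  csInf_le (schwarz_bddBelow t) ⟨hs, h⟩

lemma schwarz_anti (hf : memE f) {t t' : ℝ} (h : t ≤ t') : schwarz f t' ≤ schwarz f t := by
  apply csInf_le_csInf (schwarz_bddBelow t') ⟨_, M_mem hf t⟩
  rintro s ⟨hs0, hsd⟩
  exact ⟨hs0, hsd.trans (ENNReal.ofReal_le_ofReal h)⟩

lemma M_le_schwarz_zero (hf : memE f) :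
    (eLpNorm f ⊤ volume).toReal ≤ schwarz f 0 := by
  apply le_csInf ⟨_, M_mem hf 0⟩
  rintro s ⟨hs0, hsd⟩
  have h0 : distFun f s = 0 := le_antisymm (by simpa using hsd) zero_le
  have hae : ∀ᵐ p ∂(volume : Measure (R3 × R3)), f p ≤ s := by
    rw [ae_iff]
    have hset : {p : R3 × R3 | ¬ f p ≤ s} = {p : R3 × R3 | f p > s} := by
      ext p; simp [not_le]
    rw [hset]
    exact h0
  have hbound : eLpNorm f ⊤ volume ≤ ENNReal.ofReal s := by
    rw [eLpNorm_exponent_top]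
    apply eLpNormEssSup_le_of_ae_bound
    filter_upwards [hae] with p hp
    rw [Real.norm_eq_abs, abs_of_nonneg (hf.1 p)]
    exact hp
  calc (eLpNorm f ⊤ volume).toReal ≤ (ENNReal.ofReal s).toReal :=
        ENNReal.toReal_mono ENNReal.ofReal_ne_top hbound
    _ = s := ENNReal.toReal_ofReal hs0

end PseudoInvAux

open PseudoInvAux

theorem pseudoInv_properties (f : R3 × R3 → ℝ) (hf : memE f)
    (hne : ¬ (f =ᵐ[volume] 0)) (φ : R3 → ℝ) (hφ : memX φ)
    (x₀ : R3) (hx₀ : ∀ x, φ x₀ ≤ φ x) :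
    AntitoneOn (pseudoInv f φ (φ x₀)) (Ioo 0 ((eLpNorm f ⊤ volume).toReal)) ∧
    (∀ s ∈ Ioo (0 : ℝ) ((eLpNorm f ⊤ volume).toReal),
      pseudoInv f φ (φ x₀) s ∈ Ico (φ x₀) (0 : ℝ)) ∧
    (∀ s ∈ Ioo (0 : ℝ) ((eLpNorm f ⊤ volume).toReal), ∀ p : R3 × R3,
      (genRearr f φ p > s → ‖p.2‖ ^ 2 / 2 + φ p.1 ≤ pseudoInv f φ (φ x₀) s) ∧
      (genRearr f φ p ≤ s → ‖p.2‖ ^ 2 / 2 + φ p.1 ≥ pseudoInv f φ (φ x₀) s)) := by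
  set M : ℝ := (eLpNorm f ⊤ volume).toReal with hM
  set m : ℝ := φ x₀ with hm
  set S : ℝ → Set ℝ := fun s => {e : ℝ | e ∈ Ico m (0:ℝ) ∧ schwarz f (aphi φ e) > s}
    with hS
  have hm0 : m < 0 := by
    have h1 := neg_bound hφ x₀
    have h2 : 0 < mX φ / (1 + ‖x₀‖) := by
      have := hφ.2.2.2.2
      positivity
    rw [hm]; linarith
  have hSm : ∀ {s : ℝ}, s < M → m ∈ S s := by
    intro s hsM
    refine ⟨⟨le_refl m, hm0⟩, ?_⟩
    have h1 : aphi φ m = 0 := aphi_min hx₀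
    rw [h1]
    exact lt_of_lt_of_le hsM (M_le_schwarz_zero hf)
  have hbdd : ∀ s : ℝ, BddAbove (S s) := fun s => ⟨0, fun e he => he.1.2.le⟩
  have hub : ∀ s : ℝ, 0 < s → ∃ e₀ : ℝ, e₀ < 0 ∧ ∀ e ∈ S s, e ≤ e₀ := by
    intro s hs
    have hfin : distFun f s < ⊤ := hf.2.1.measure_gt_lt_top hs
    obtain ⟨e₀, he₀, hD⟩ := aphi_unbounded hφ (distFun f s).toReal
    refine ⟨e₀, he₀, ?_⟩
    intro e he
    by_contra hcon
    push_neg at hcon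
    have h1 : aphi φ e₀ ≤ aphi φ e := aphi_mono hφ hcon.le he.1.2
    have h2 : distFun f s ≤ ENNReal.ofReal (aphi φ e) := by
      calc distFun f s = ENNReal.ofReal ((distFun f s).toReal) :=
            (ENNReal.ofReal_toReal hfin.ne).symm
        _ ≤ ENNReal.ofReal (aphi φ e) := ENNReal.ofReal_le_ofReal (hD.trans h1)
    have h3 : schwarz f (aphi φ e) ≤ s := schwarz_le hs.le h2
    exact absurd he.2 (not_lt.2 h3)
  refine ⟨?_, ?_, ?_⟩
  · intro s hsI s' hsI' hss'
    apply csSup_le_csSup (hbdd s) ⟨m, hSm hsI'.2⟩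
    rintro e ⟨he1, he2⟩
    exact ⟨he1, lt_of_le_of_lt hss' he2⟩
  · intro s hsI
    constructor
    · exact le_csSup (hbdd s) (hSm hsI.2)
    · obtain ⟨e₀, he₀, hub'⟩ := hub s hsI.1
      exact lt_of_le_of_lt (csSup_le ⟨m, hSm hsI.2⟩ hub') he₀
  · intro s hsI p
    set E : ℝ := ‖p.2‖ ^ 2 / 2 + φ p.1 with hE
    have hEm : m ≤ E := by
      have h1 := hx₀ p.1
      have h2 : 0 ≤ ‖p.2‖ ^ 2 / 2 := by positivity
      rw [hE, hm]; linarith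
    constructor
    · intro hgt
      have hE0 : E < 0 := by
        by_contra hcon
        push_neg at hcon
        have : genRearr f φ p = 0 := by
          unfold genRearr
          rw [if_neg (not_lt.2 hcon)]
        rw [this] at hgt
        linarith [hsI.1]
      have hgr : genRearr f φ p = schwarz f (aphi φ E) := by
        unfold genRearr
        rw [if_pos hE0]
      apply le_csSup (hbdd s)
      exact ⟨⟨hEm, hE0⟩, by rw [← hgr]; exact hgt⟩
    · intro hle
      apply csSup_le ⟨m, hSm hsI.2⟩
      intro e he
      by_contra hcon
      push_neg at hcon
      have hE0 : E < 0 := hcon.trans he.1.2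
      have hgr : genRearr f φ p = schwarz f (aphi φ E) := by
        unfold genRearr
        rw [if_pos hE0]
      have h1 : aphi φ E ≤ aphi φ e := aphi_mono hφ hcon.le he.1.2
      have h2 : schwarz f (aphi φ e) ≤ schwarz f (aphi φ E) := schwarz_anti hf h1
      rw [← hgr] at h2
      linarith [he.2]
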